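/- Let p ≥ 1 and n > p, and let t_0 < t_1 < … < t_{n+p} be a strictly increasing knot vector satisfying Δt_i = Δt_{i+n−p} for all i = 0, …, 2p−1, where Δt_i := t_{i+1} − t_i. Let L ∈ ℝ and let control points (x_i, y_i) ∈ ℝ², i = 0, …, n−1, satisfy x_i + L = x_{n−p+i} and y_i = y_{n−p+i} for i = 0, …, p−1. Define the plane B-spline curve (x(t), y(t)) := Σ_{i=0}^{n−1} B_i^p(t) (x_i, y_i). Then x(t_p) + L = x(t_n), and for every k = 0, …, p−1 the k-th iterated derivative of y at t_p equals the k-th iterated derivative of y at t_n. -/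

import Mathlib

/-- The B-spline functions of degree `p` for the knot sequence `t`, defined by the
Cox–de Boor recursion. `bspline t p i` is `B_i^p`. Fractions with zero denominator
are `0` (Lean's convention `x / 0 = 0`). -/
noncomputable def bspline (t : ℕ → ℝ) : ℕ → ℕ → ℝ → ℝ
  | 0, i, x => if t i ≤ x ∧ x < t (i + 1) then 1 else 0
  | p + 1, i, x =>
      (x - t i) / (t (i + p + 1) - t i) * bspline t p i x +
      (t (i + p + 2) - x) / (t (i + p + 2) - t (i + 1)) * bspline t p (i + 1) x


section lemmas
variable {t : ℕ → ℝ}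

lemma bspline_congr {t' : ℕ → ℝ} : ∀ (p i : ℕ), (∀ j, i ≤ j → j ≤ i + p + 1 → t j = t' j) →
    bspline t p i = bspline t' p i := by
  intro p
  induction p with
  | zero =>
    intro i h
    funext x
    rw [bspline, bspline, h i le_rfl (by omega), h (i+1) (by omega) (by omega)]
  | succ q ih =>
    intro i h
    funext x
    rw [bspline, bspline, h i le_rfl (by omega), h (i+1) (by omega) (by omega),
      h (i+q+1) (by omega) (by omega), h (i+q+2) (by omega) (by omega),
      ih i (fun j h1 h2 => h j h1 (by omega)), ih (i+1) (fun j h1 h2 => h j (by omega) (by omega))]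

variable (ht : ∀ j, t j < t (j + 1))
include ht

lemma t_strictMono : StrictMono t := strictMono_nat_of_lt_succ ht

lemma bspline_zero_of_lt : ∀ (p i : ℕ) (x : ℝ), x < t i → bspline t p i x = 0 := by
  intro p
  induction p with
  | zero => intro i x hx; rw [bspline]; simp [not_le.2 hx]
  | succ q ih =>
    intro i x hx
    rw [bspline, ih i x hx, ih (i+1) x (hx.trans (ht i)), mul_zero, mul_zero, add_zero]

lemma bspline_zero_of_ge : ∀ (p i : ℕ) (x : ℝ), t (i + p + 1) ≤ x → bspline t p i x = 0 := by
  intro p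
  induction p with
  | zero => intro i x hx; rw [bspline]; simp [not_lt.2 hx]
  | succ q ih =>
    intro i x hx
    have h1 : t (i + q + 1) ≤ x :=
      le_trans (le_of_lt ((t_strictMono ht).lt_iff_lt.2 (by omega))) hx
    have h2 : t (i + 1 + q + 1) ≤ x := by
      have e : i + 1 + q + 1 = i + (q + 1) + 1 := by omega
      rw [e]; exact hx
    rw [bspline, ih i x h1, ih (i+1) x h2, mul_zero, mul_zero, add_zero]

lemma bspline_zero_of_le (p i : ℕ) (hp : 1 ≤ p) {x : ℝ} (hx : x ≤ t i) : bspline t p i x = 0 := by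
  rcases lt_or_eq_of_le hx with h | h
  · exact bspline_zero_of_lt ht p i x h
  · obtain ⟨q, rfl⟩ : ∃ q, p = q + 1 := ⟨p - 1, by omega⟩
    subst h
    rw [bspline, bspline_zero_of_lt ht q (i+1) (t i) (ht i)]
    simp

end lemmas

section lemmas2
variable {t : ℕ → ℝ}

lemma bspline_shift (T : ℝ) (m : ℕ) : ∀ (p i : ℕ),
    (∀ j, i ≤ j → j ≤ i + p + 1 → t (j + m) = t j + T) →
    ∀ x, bspline t p (i + m) (x + T) = bspline t p i x := by
  intro p
  induction p with
  | zero =>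
    intro i h x
    rw [bspline, bspline]
    have e1 : t (i + m) = t i + T := h i le_rfl (by omega)
    have e2 : t (i + m + 1) = t (i + 1) + T := by
      have : i + m + 1 = (i + 1) + m := by omega
      rw [this, h (i+1) (by omega) (by omega)]
    rw [e1, e2]
    by_cases hc : t i ≤ x ∧ x < t (i + 1)
    · simp only [if_pos hc, if_pos (show t i + T ≤ x + T ∧ x + T < t (i+1) + T by
        constructor <;> linarith [hc.1, hc.2])]
    · rw [if_neg hc, if_neg (by
        intro hc2
        exact hc ⟨by linarith [hc2.1], by linarith [hc2.2]⟩)]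
  | succ q ih =>
    intro i h x
    rw [bspline, bspline]
    have e0 : t (i + m) = t i + T := h i le_rfl (by omega)
    have e1 : t (i + m + 1) = t (i + 1) + T := by
      have : i + m + 1 = (i + 1) + m := by omega
      rw [this]; exact h (i+1) (by omega) (by omega)
    have e2 : t (i + m + q + 1) = t (i + q + 1) + T := by
      have : i + m + q + 1 = (i + q + 1) + m := by omega
      rw [this]; exact h (i+q+1) (by omega) (by omega)
    have e3 : t (i + m + q + 2) = t (i + q + 2) + T := by
      have : i + m + q + 2 = (i + q + 2) + m := by omega
      rw [this]; exact h (i+q+2) (by omega) (by omega)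
    have r1 : bspline t q (i + m) (x + T) = bspline t q i x :=
      ih i (fun j hj hj' => h j hj (by omega)) x
    have r2 : bspline t q (i + m + 1) (x + T) = bspline t q (i + 1) x := by
      have : i + m + 1 = (i + 1) + m := by omega
      rw [this]
      exact ih (i+1) (fun j hj hj' => h j (by omega) (by omega)) x
    rw [e0, e1, e2, e3, r1, r2]
    ring_nf

lemma bspline_partition (ht : ∀ j, t j < t (j + 1)) : ∀ (p b : ℕ) (x : ℝ),
    t (b + p) ≤ x → x < t (b + p + 1) →
    ∑ r ∈ Finset.range (p + 1), bspline t p (b + r) x = 1 := by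
  intro p
  induction p with
  | zero =>
    intro b x h1 h2
    rw [Finset.sum_range_one, bspline, if_pos ⟨by simpa using h1, by simpa using h2⟩]
  | succ q ih =>
    intro b x h1 h2
    have hmono := t_strictMono ht
    have key : ∀ r, bspline t (q+1) (b + r) x =
        (x - t (b+r)) / (t (b+r+q+1) - t (b+r)) * bspline t q (b+r) x +
        (t (b+r+q+2) - x) / (t (b+r+q+2) - t (b+r+1)) * bspline t q (b+r+1) x := fun r => by
      rw [bspline]
    calc ∑ r ∈ Finset.range (q + 2), bspline t (q+1) (b + r) x
        = ∑ r ∈ Finset.range (q + 2),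
            ((x - t (b+r)) / (t (b+r+q+1) - t (b+r)) * bspline t q (b+r) x +
             (t (b+r+q+2) - x) / (t (b+r+q+2) - t (b+r+1)) * bspline t q (b+r+1) x) := by
          exact Finset.sum_congr rfl (fun r _ => key r)
      _ = ∑ r ∈ Finset.range (q + 2), (x - t (b+r)) / (t (b+r+q+1) - t (b+r)) * bspline t q (b+r) x
          + ∑ r ∈ Finset.range (q + 2),
            (t (b+r+q+2) - x) / (t (b+r+q+2) - t (b+r+1)) * bspline t q (b+r+1) x := by
          rw [Finset.sum_add_distrib]
      _ = ∑ r ∈ Finset.range (q + 1), (x - t (b+(r+1))) / (t (b+(r+1)+q+1) - t (b+(r+1))) * bspline t q (b+(r+1)) x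
          + ∑ r ∈ Finset.range (q + 1),
            (t (b+r+q+2) - x) / (t (b+r+q+2) - t (b+r+1)) * bspline t q (b+r+1) x := by
          congr 1
          · -- drop first term (r = 0) since bspline t q b x = 0 (x ≥ t (b+q+1))
            rw [Finset.sum_range_succ'] -- splits off r = 0
            simp only [Nat.add_zero]
            rw [bspline_zero_of_ge ht q b x (by
              have e : b + q + 1 = b + (q + 1) := by omega
              rw [e]; exact h1), mul_zero, add_zero]
          · -- drop last term (r = q+1) since bspline t q (b+q+2) x = 0 (x < t (b+q+2))
            rw [Finset.sum_range_succ]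
            rw [bspline_zero_of_lt ht q (b+(q+1)+1) x (by
              have : x < t (b + q + 2) := by
                have e : b + (q+1) + 1 = b + q + 2 := by omega
                calc x < t (b + (q+1) + 1) := h2
                _ = t (b + q + 2) := by rw [e]
              have e : b + (q+1) + 1 = b + q + 2 := by omega
              rw [e]; exact this)]
            simp
      _ = ∑ r ∈ Finset.range (q + 1), bspline t q (b + 1 + r) x := by
          rw [← Finset.sum_add_distrib]
          refine Finset.sum_congr rfl (fun r hr => ?_)
          have hd : t (b+r+q+2) - t (b+r+1) ≠ 0 :=
            ne_of_gt (sub_pos.2 (hmono.lt_iff_lt.2 (by omega)))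
          have e2 : b + r + 1 + q + 1 = b + r + q + 2 := by omega
          have e3 : b + 1 + r = b + r + 1 := by omega
          simp only [show b + (r+1) = b + r + 1 from by omega]
          rw [e2, e3, ← add_mul]
          rw [← add_div]
          have : x - t (b + r + 1) + (t (b + r + q + 2) - x) = t (b+r+q+2) - t (b+r+1) := by ring
          rw [this, div_self hd, one_mul]
      _ = 1 := by
          refine ih (b+1) x ?_ ?_
          · have e : b + 1 + q = b + (q + 1) := by omega
            rw [e]; exact h1
          · have e : b + 1 + q + 1 = b + (q+1) + 1 := by omega
            rw [e]; exact h2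

end lemmas2

section lemmas3
variable {t : ℕ → ℝ} (ht : ∀ j, t j < t (j + 1))
include ht

lemma bspline_one_eq (i : ℕ) : bspline t 1 i = fun x =>
    max 0 (min ((x - t i) / (t (i+1) - t i)) ((t (i+2) - x) / (t (i+2) - t (i+1)))) := by
  funext x
  have d1 : (0:ℝ) < t (i+1) - t i := sub_pos.2 (ht i)
  have d2 : (0:ℝ) < t (i+2) - t (i+1) := sub_pos.2 (ht (i+1))
  rw [show (1:ℕ) = 0 + 1 from rfl, bspline, bspline, bspline]
  simp only [Nat.add_zero, Nat.zero_add]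
  rcases lt_or_ge x (t i) with h0 | h0
  · rw [if_neg (by intro hc; linarith [hc.1]), if_neg (by intro hc; linarith [hc.1, ht i])]
    have hmin : min ((x - t i) / (t (i+1) - t i)) ((t (i+2) - x) / (t (i+2) - t (i+1)))
        ≤ (x - t i) / (t (i+1) - t i) := min_le_left _ _
    have : (x - t i) / (t (i+1) - t i) < 0 := div_neg_of_neg_of_pos (by linarith) d1
    rw [max_eq_left (by linarith)]
    ring
  rcases lt_or_ge x (t (i+1)) with h1 | h1
  · rw [if_pos ⟨h0, h1⟩, if_neg (by intro hc; linarith [hc.1])]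
    have ha : (0:ℝ) ≤ (x - t i) / (t (i+1) - t i) := div_nonneg (by linarith) d1.le
    have hab : (x - t i) / (t (i+1) - t i) ≤ (t (i+2) - x) / (t (i+2) - t (i+1)) := by
      rw [div_le_div_iff₀ d1 d2]
      nlinarith [ht i, ht (i+1)]
    rw [min_eq_left hab, max_eq_right ha]
    ring
  rcases lt_or_ge x (t (i+2)) with h2 | h2
  · rw [if_neg (by intro hc; linarith [hc.2]), if_pos ⟨h1, h2⟩]
    have hb : (0:ℝ) ≤ (t (i+2) - x) / (t (i+2) - t (i+1)) := div_nonneg (by linarith) d2.le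
    have hba : (t (i+2) - x) / (t (i+2) - t (i+1)) ≤ (x - t i) / (t (i+1) - t i) := by
      rw [div_le_div_iff₀ d2 d1]
      nlinarith [ht i, ht (i+1)]
    rw [min_eq_right hba, max_eq_right hb]
    ring
  · rw [if_neg (by intro hc; linarith [hc.2, ht (i+1)]), if_neg (by intro hc; linarith [hc.2])]
    have : (t (i+2) - x) / (t (i+2) - t (i+1)) ≤ 0 := div_nonpos_of_nonpos_of_nonneg (by linarith) d2.le
    rw [max_eq_left (le_trans (min_le_right _ _) this)]
    ring

lemma bspline_continuous : ∀ (q i : ℕ), Continuous (bspline t (q + 1) i) := by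
  intro q
  induction q with
  | zero =>
    intro i
    rw [bspline_one_eq ht i]
    exact continuous_const.max ((continuous_id.sub continuous_const).div_const _ |>.min
      ((continuous_const.sub continuous_id).div_const _))
  | succ q ih =>
    intro i
    have : bspline t (q+2) i = fun x =>
        (x - t i) / (t (i + q + 2) - t i) * bspline t (q+1) i x +
        (t (i + q + 3) - x) / (t (i + q + 3) - t (i + 1)) * bspline t (q+1) (i + 1) x := by
      funext x; rw [bspline]
      norm_num [show i + (q+1) + 1 = i + q + 2 from by omega, show i + (q+1) + 2 = i + q + 3 from by omega]
    rw [this]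
    exact (((continuous_id.sub continuous_const).div_const _).mul (ih i)).add
      (((continuous_const.sub continuous_id).div_const _).mul (ih (i+1)))

end lemmas3

set_option maxHeartbeats 1000000

set_option maxHeartbeats 1000000 in
private lemma bspline_keyid (Q A B C P1 P2 P3 u v w x : ℝ) (d1 : P1 - A ≠ 0) (d2 : P2 - B ≠ 0)
    (d3 : P3 - C ≠ 0) (d4 : P2 - A ≠ 0) (d5 : P3 - B ≠ 0) :
    (Q + 1 + 1) * (((x - A) / (P1 - A) * u + (P2 - x) / (P2 - B) * v) / (P2 - A)
      - ((x - B) / (P2 - B) * v + (P3 - x) / (P3 - C) * w) / (P3 - B)) =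
    1 / (P2 - A) * ((x - A) / (P1 - A) * u + (P2 - x) / (P2 - B) * v) +
      (x - A) / (P2 - A) * ((Q + 1) * (u / (P1 - A) - v / (P2 - B))) +
      ((0 - 1) / (P3 - B) * ((x - B) / (P2 - B) * v + (P3 - x) / (P3 - C) * w) +
        (P3 - x) / (P3 - B) * ((Q + 1) * (v / (P2 - B) - w / (P3 - C)))) := by
  have e1 : (x - A) / (P1 - A) * u = (x - A) * u / (P1 - A) := by ring
  have e2 : (P2 - x) / (P2 - B) * v = (P2 - x) * v / (P2 - B) := by ring
  have e3 : (x - B) / (P2 - B) * v = (x - B) * v / (P2 - B) := by ring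
  have e4 : (P3 - x) / (P3 - C) * w = (P3 - x) * w / (P3 - C) := by ring
  rw [e1, e2, e3, e4, div_add_div _ _ d1 d2, div_add_div _ _ d2 d3, div_div, div_div]
  field_simp
  ring

open Filter Topology Set in
lemma hasDerivAt_glue {f g : ℝ → ℝ} {x : ℝ} {U : Set ℝ} (hU : U ∈ 𝓝 x)
    (f_diff : ∀ y ∈ U, y ≠ x → HasDerivAt f (g y) y) (hf : ContinuousAt f x)
    (hg : ContinuousAt g x) : HasDerivAt f (g x) x := by
  have hs : U ∩ Ioi x ∈ 𝓝[>] x :=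
    Filter.inter_mem (nhdsWithin_le_nhds hU) self_mem_nhdsWithin
  have hs' : U ∩ Iio x ∈ 𝓝[<] x :=
    Filter.inter_mem (nhdsWithin_le_nhds hU) self_mem_nhdsWithin
  have A : HasDerivWithinAt f (g x) (Ici x) x := by
    apply hasDerivWithinAt_Ici_of_tendsto_deriv
      (fun y hy => (f_diff y hy.1 (ne_of_gt hy.2)).differentiableAt.differentiableWithinAt)
      hf.continuousWithinAt hs
    have hgt : Tendsto g (𝓝[>] x) (𝓝 (g x)) := hg.mono_left nhdsWithin_le_nhds
    apply hgt.congr'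
    filter_upwards [hs] with y hy
    exact ((f_diff y hy.1 (ne_of_gt hy.2)).deriv).symm
  have B : HasDerivWithinAt f (g x) (Iic x) x := by
    apply hasDerivWithinAt_Iic_of_tendsto_deriv
      (fun y hy => (f_diff y hy.1 (ne_of_lt hy.2)).differentiableAt.differentiableWithinAt)
      hf.continuousWithinAt hs'
    have hgt : Tendsto g (𝓝[<] x) (𝓝 (g x)) := hg.mono_left nhdsWithin_le_nhds
    apply hgt.congr'
    filter_upwards [hs'] with y hy
    exact ((f_diff y hy.1 (ne_of_lt hy.2)).deriv).symm
  simpa using B.union A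

section lemmas4
variable {t : ℕ → ℝ} (ht : ∀ j, t j < t (j + 1))
include ht

open Filter Topology Set

lemma knot_classify (htop : Tendsto t atTop atTop) (x : ℝ) (hx : ∀ j, x ≠ t j) :
    x < t 0 ∨ ∃ j, t j < x ∧ x < t (j + 1) := by
  rcases lt_or_ge x (t 0) with h | h
  · exact Or.inl h
  right
  have h0 : t 0 < x := lt_of_le_of_ne h (Ne.symm (hx 0))
  obtain ⟨J, hJ⟩ : ∃ J, x < t J := (htop.eventually (eventually_gt_atTop x)).exists
  set j := Nat.findGreatest (fun j => t j < x) J with hjdef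
  have hPj : t j < x := Nat.findGreatest_spec (P := fun k => t k < x) (Nat.zero_le J) h0
  have hjJ : j ≤ J := Nat.findGreatest_le J
  have hjneJ : j ≠ J := by
    intro hEq
    rw [hEq] at hPj
    exact absurd hJ (not_lt.2 hPj.le)
  have hnot : ¬ t (j + 1) < x :=
    Nat.findGreatest_is_greatest (Nat.lt_succ_self j) (by omega)
  exact ⟨j, hPj, lt_of_le_of_ne (not_lt.1 hnot) (hx (j+1))⟩

lemma bspline_zero_locally_const (htop : Tendsto t atTop atTop) (x : ℝ) (hx : ∀ j, x ≠ t j) :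
    ∃ U : Set ℝ, IsOpen U ∧ x ∈ U ∧ ∀ i, ∀ y ∈ U, bspline t 0 i y = bspline t 0 i x := by
  have hmono := (t_strictMono ht).monotone
  rcases knot_classify ht htop x hx with h | ⟨j, hj1, hj2⟩
  · refine ⟨Iio (t 0), isOpen_Iio, h, fun i y hy => ?_⟩
    rw [bspline, bspline, if_neg, if_neg]
    · intro hc; exact absurd hc.1 (not_le.2 (lt_of_lt_of_le h (hmono (Nat.zero_le i))))
    · intro hc; exact absurd hc.1 (not_le.2 (lt_of_lt_of_le hy (hmono (Nat.zero_le i))))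
  · refine ⟨Ioo (t j) (t (j+1)), isOpen_Ioo, ⟨hj1, hj2⟩, fun i y hy => ?_⟩
    have key : ∀ z, z ∈ Ioo (t j) (t (j+1)) → bspline t 0 i z = if i = j then 1 else 0 := by
      intro z hz
      rw [bspline]
      rcases Nat.lt_trichotomy i j with hij | hij | hij
      · rw [if_neg (show ¬ (i = j) from by omega), if_neg]
        intro hc
        exact absurd hz.1 (not_lt.2 (hc.2.le.trans (hmono (by omega : i + 1 ≤ j))))
      · subst hij
        rw [if_pos rfl, if_pos ⟨hz.1.le, hz.2⟩]
      · rw [if_neg (show ¬ (i = j) from by omega), if_neg]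
        intro hc
        exact absurd hz.2 (not_lt.2 ((hmono (by omega : j + 1 ≤ i)).trans hc.1))
    rw [key y hy, key x ⟨hj1, hj2⟩]

lemma bspline_hasDerivAt_offknot (htop : Tendsto t atTop atTop) : ∀ (q i : ℕ) (x : ℝ),
    (∀ j, x ≠ t j) →
    HasDerivAt (bspline t (q+1) i)
      (((q : ℝ) + 1) * (bspline t q i x / (t (i+q+1) - t i)
        - bspline t q (i+1) x / (t (i+q+2) - t (i+1)))) x := by
  intro q
  induction q with
  | zero =>
    intro i x hx
    obtain ⟨U, hUo, hxU, hUc⟩ := bspline_zero_locally_const ht htop x hx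
    set c1 := bspline t 0 i x with hc1
    set c2 := bspline t 0 (i+1) x with hc2
    have hg : HasDerivAt (fun y => (y - t i) / (t (i+1) - t i) * c1
        + (t (i+2) - y) / (t (i+2) - t (i+1)) * c2)
        (1 / (t (i+1) - t i) * c1 + (0 - 1) / (t (i+2) - t (i+1)) * c2) x := by
      exact ((((hasDerivAt_id x).sub_const (t i)).div_const _).mul_const c1).add
        ((((hasDerivAt_const x (t (i+2))).sub (hasDerivAt_id x)).div_const _).mul_const c2)
    have heq : bspline t 1 i =ᶠ[𝓝 x] fun y => (y - t i) / (t (i+1) - t i) * c1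
        + (t (i+2) - y) / (t (i+2) - t (i+1)) * c2 := by
      filter_upwards [hUo.mem_nhds hxU] with y hy
      rw [show (1:ℕ) = 0 + 1 from rfl, bspline]
      rw [hUc i y hy, hUc (i+1) y hy]
    have := hg.congr_of_eventuallyEq heq
    refine this.congr_deriv (Eq.symm ?_)
    all_goals try push_cast
    all_goals try ring
  | succ q ih =>
    intro i x hx
    simp only [show i + (q+1) + 1 = i + q + 2 from by omega,
      show i + (q+1) + 2 = i + q + 3 from by omega]
    have h1 := ih i x hx
    have h2 := ih (i+1) x hx
    have e1 : i + 1 + q + 1 = i + q + 2 := by omega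
    have e2 : i + 1 + q + 2 = i + q + 3 := by omega
    rw [e1, e2, show i + 1 + 1 = i + 2 from rfl] at h2
    have hrec : bspline t (q+2) i = fun y =>
        (y - t i) / (t (i + q + 2) - t i) * bspline t (q+1) i y +
        (t (i + q + 3) - y) / (t (i + q + 3) - t (i + 1)) * bspline t (q+1) (i + 1) y := by
      funext y
      rw [bspline]
      norm_num [show i + (q+1) + 1 = i + q + 2 from by omega,
        show i + (q+1) + 2 = i + q + 3 from by omega]
    rw [hrec]
    have hA : HasDerivAt (fun y => (y - t i) / (t (i+q+2) - t i)) (1 / (t (i+q+2) - t i)) x :=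
      ((hasDerivAt_id x).sub_const _).div_const _
    have hB : HasDerivAt (fun y => (t (i+q+3) - y) / (t (i+q+3) - t (i+1)))
        ((0 - 1) / (t (i+q+3) - t (i+1))) x :=
      ((hasDerivAt_const x (t (i+q+3))).sub (hasDerivAt_id x)).div_const _
    have hsum := (hA.mul h1).add (hB.mul h2)
    refine hsum.congr_deriv (Eq.symm ?_)
    -- now a real-number identity
    have hsm := t_strictMono ht
    have hP : bspline t (q+1) i x =
        (x - t i) / (t (i + q + 1) - t i) * bspline t q i x +
        (t (i + q + 2) - x) / (t (i + q + 2) - t (i + 1)) * bspline t q (i + 1) x := by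
      rw [bspline]
    have hQ : bspline t (q+1) (i+1) x =
        (x - t (i+1)) / (t (i + q + 2) - t (i+1)) * bspline t q (i+1) x +
        (t (i + q + 3) - x) / (t (i + q + 3) - t (i + 2)) * bspline t q (i + 2) x := by
      rw [bspline]
      norm_num [show i + 1 + q + 1 = i + q + 2 from by omega,
        show i + 1 + q + 2 = i + q + 3 from by omega]
    rw [hP, hQ]
    set A := t i with eqA
    set B := t (i+1) with eqB
    set C := t (i+2) with eqC
    set P1 := t (i+q+1) with eqP1
    set P2 := t (i+q+2) with eqP2
    set P3 := t (i+q+3) with eqP3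
    clear_value A B C P1 P2 P3
    have d1 : P1 - A ≠ 0 := by
      rw [eqP1, eqA]
      exact ne_of_gt (sub_pos.2 (hsm.lt_iff_lt.2 (by omega)))
    have d2 : P2 - B ≠ 0 := by
      rw [eqP2, eqB]
      exact ne_of_gt (sub_pos.2 (hsm.lt_iff_lt.2 (by omega)))
    have d3 : P3 - C ≠ 0 := by
      rw [eqP3, eqC]
      exact ne_of_gt (sub_pos.2 (hsm.lt_iff_lt.2 (by omega)))
    have d4 : P2 - A ≠ 0 := by
      rw [eqP2, eqA]
      exact ne_of_gt (sub_pos.2 (hsm.lt_iff_lt.2 (by omega)))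
    have d5 : P3 - B ≠ 0 := by
      rw [eqP3, eqB]
      exact ne_of_gt (sub_pos.2 (hsm.lt_iff_lt.2 (by omega)))
    generalize bspline t q i x = u
    generalize bspline t q (i+1) x = v
    generalize bspline t q (i+2) x = w
    push_cast
    exact bspline_keyid (q:ℝ) A B C P1 P2 P3 u v w x d1 d2 d3 d4 d5

end lemmas4

section lemmas5
variable {t : ℕ → ℝ} (ht : ∀ j, t j < t (j + 1))
include ht

open Filter Topology Set

lemma knot_isolated (j : ℕ) : ∃ U ∈ 𝓝 (t j), ∀ y ∈ U, y ≠ t j → ∀ k, y ≠ t k := by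
  have hmono := (t_strictMono ht).monotone
  cases j with
  | zero =>
    refine ⟨Iio (t 1), Iio_mem_nhds (ht 0), fun y hy hne k hk => ?_⟩
    rcases Nat.eq_zero_or_pos k with rfl | hkpos
    · exact hne hk
    · rw [hk] at hy
      exact absurd hy (not_lt.2 (hmono hkpos))
  | succ m =>
    refine ⟨Ioo (t m) (t (m+2)), Ioo_mem_nhds (ht m) (ht (m+1)), fun y hy hne k hk => ?_⟩
    rcases Nat.lt_trichotomy k (m+1) with hkm | hkm | hkm
    · rw [hk] at hy
      exact absurd hy.1 (not_lt.2 (hmono (by omega : k ≤ m)))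
    · rw [hkm] at hk; exact hne hk
    · rw [hk] at hy
      exact absurd hy.2 (not_lt.2 (hmono (by omega : m + 2 ≤ k)))

lemma bspline_hasDerivAt (htop : Tendsto t atTop atTop) (q i : ℕ) (x : ℝ) :
    HasDerivAt (bspline t (q+2) i)
      (((q : ℝ) + 2) * (bspline t (q+1) i x / (t (i+q+2) - t i)
        - bspline t (q+1) (i+1) x / (t (i+q+3) - t (i+1)))) x := by
  have hform : ∀ z, (∀ j, z ≠ t j) → HasDerivAt (bspline t (q+2) i)
      (((q : ℝ) + 2) * (bspline t (q+1) i z / (t (i+q+2) - t i)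
        - bspline t (q+1) (i+1) z / (t (i+q+3) - t (i+1)))) z := by
    intro z hz
    have := bspline_hasDerivAt_offknot ht htop (q+1) i z hz
    simp only [show i + (q+1) + 1 = i + q + 2 from by omega,
      show i + (q+1) + 2 = i + q + 3 from by omega] at this
    convert this using 2
    push_cast
    ring
  by_cases hx : ∀ j, x ≠ t j
  · exact hform x hx
  · push_neg at hx
    obtain ⟨j, rfl⟩ := hx
    obtain ⟨U, hU, hUiso⟩ := knot_isolated ht j
    exact hasDerivAt_glue hU (fun y hy hne => hform y (hUiso y hy hne))
      ((bspline_continuous ht (q+1) i).continuousAt)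
      ((continuous_const.mul (((bspline_continuous ht q i).div_const _).sub
        ((bspline_continuous ht q (i+1)).div_const _))).continuousAt)

lemma bspline_contDiff (htop : Tendsto t atTop atTop) : ∀ (q i : ℕ),
    ContDiff ℝ (q : ℕ) (bspline t (q+1) i) := by
  intro q
  induction q with
  | zero =>
    intro i
    rw [show ((0:ℕ) : WithTop ℕ∞) = 0 from rfl]
    exact contDiff_zero.2 (bspline_continuous ht 0 i)
  | succ q ih =>
    intro i
    have hcast : ((q+1 : ℕ) : WithTop ℕ∞) = (q : ℕ) + 1 := by push_cast; rfl
    rw [hcast, contDiff_succ_iff_deriv]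
    refine ⟨fun z => (bspline_hasDerivAt ht htop q i z).differentiableAt, ?_, ?_⟩
    · intro h
      simp at h
    · have hderiv : deriv (bspline t (q+2) i) = fun z =>
          ((q : ℝ) + 2) * (bspline t (q+1) i z / (t (i+q+2) - t i)
            - bspline t (q+1) (i+1) z / (t (i+q+3) - t (i+1))) := by
        funext z
        exact (bspline_hasDerivAt ht htop q i z).deriv
      rw [hderiv]
      exact contDiff_const.mul (((ih i).div_const _).sub ((ih (i+1)).div_const _))

end lemmas5

section flat
open Filter Topology Set

lemma iteratedDeriv_add' {n : ℕ} {f g : ℝ → ℝ} (hf : ContDiff ℝ n f) (hg : ContDiff ℝ n g)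
    (x : ℝ) : iteratedDeriv n (fun s => f s + g s) x = iteratedDeriv n f x + iteratedDeriv n g x := by
  have hfg : (fun s => f s + g s) = f + g := rfl
  rw [hfg, ← iteratedDerivWithin_univ, ← iteratedDerivWithin_univ, ← iteratedDerivWithin_univ]
  exact iteratedDerivWithin_add (Set.mem_univ x) uniqueDiffOn_univ
    (contDiffOn_univ.2 hf x (Set.mem_univ x)) (contDiffOn_univ.2 hg x (Set.mem_univ x))

lemma iteratedDeriv_zero_on_Iic {f : ℝ → ℝ} {a : ℝ} (h0 : ∀ s, s ≤ a → f s = 0) :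
    ∀ (k : ℕ), ContDiff ℝ k f → ∀ s, s ≤ a → iteratedDeriv k f s = 0 := by
  intro k
  induction k with
  | zero => intro _ s hs; simpa using h0 s hs
  | succ k ih =>
    intro hf s hs
    have hprev : ∀ s, s ≤ a → iteratedDeriv k f s = 0 :=
      ih (hf.of_le (by exact_mod_cast Nat.le_succ k))
    rw [iteratedDeriv_succ]
    rcases lt_or_eq_of_le hs with hlt | heq
    · have hev : iteratedDeriv k f =ᶠ[𝓝 s] fun _ => 0 := by
        filter_upwards [Iio_mem_nhds hlt] with y hy
        exact hprev y hy.le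
      rw [hev.deriv_eq]
      simp
    · subst heq
      have hdiff : DifferentiableAt ℝ (iteratedDeriv k f) s :=
        (hf.differentiable_iteratedDeriv k (by exact_mod_cast Nat.lt_succ_self k)) s
      have hda := hdiff.hasDerivAt
      have hslope : Tendsto (slope (iteratedDeriv k f) s) (𝓝[<] s)
          (𝓝 (deriv (iteratedDeriv k f) s)) :=
        (hasDerivAt_iff_tendsto_slope.1 hda).mono_left
          (nhdsWithin_mono s fun y hy => ne_of_lt hy)
      have hzero : Tendsto (slope (iteratedDeriv k f) s) (𝓝[<] s) (𝓝 0) := by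
        apply Filter.Tendsto.congr' _ (tendsto_const_nhds (α := ℝ))
        filter_upwards [self_mem_nhdsWithin] with y hy
        rw [slope_def_field, hprev y (le_of_lt hy), hprev s le_rfl]
        simp
      exact tendsto_nhds_unique hslope hzero

lemma iteratedDeriv_zero_on_Ici {f : ℝ → ℝ} {a : ℝ} (h0 : ∀ s, a ≤ s → f s = 0) :
    ∀ (k : ℕ), ContDiff ℝ k f → ∀ s, a ≤ s → iteratedDeriv k f s = 0 := by
  intro k
  induction k with
  | zero => intro _ s hs; simpa using h0 s hs
  | succ k ih =>
    intro hf s hs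
    have hprev : ∀ s, a ≤ s → iteratedDeriv k f s = 0 :=
      ih (hf.of_le (by exact_mod_cast Nat.le_succ k))
    rw [iteratedDeriv_succ]
    rcases lt_or_eq_of_le hs with hlt | heq
    · have hev : iteratedDeriv k f =ᶠ[𝓝 s] fun _ => 0 := by
        filter_upwards [Ioi_mem_nhds hlt] with y hy
        exact hprev y hy.le
      rw [hev.deriv_eq]
      simp
    · subst heq
      have hdiff : DifferentiableAt ℝ (iteratedDeriv k f) a :=
        (hf.differentiable_iteratedDeriv k (by exact_mod_cast Nat.lt_succ_self k)) a
      have hda := hdiff.hasDerivAt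
      have hslope : Tendsto (slope (iteratedDeriv k f) a) (𝓝[>] a)
          (𝓝 (deriv (iteratedDeriv k f) a)) :=
        (hasDerivAt_iff_tendsto_slope.1 hda).mono_left
          (nhdsWithin_mono a fun y hy => ne_of_gt hy)
      have hzero : Tendsto (slope (iteratedDeriv k f) a) (𝓝[>] a) (𝓝 0) := by
        apply Filter.Tendsto.congr' _ (tendsto_const_nhds (α := ℝ))
        filter_upwards [self_mem_nhdsWithin] with y hy
        rw [slope_def_field, hprev y (le_of_lt hy), hprev a le_rfl]
        simp
      exact tendsto_nhds_unique hslope hzero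

end flat

open Filter Topology Set

/-- Theorem 1 of the paper: a plane B-spline curve whose control points satisfy the
periodicity conditions yields a periodic curve unit. The control point `p_i` has
coordinates `(x i, y i)`, and `(X, Y)` is the associated plane B-spline curve. -/
theorem periodic_bspline_curve (p n : ℕ) (hp : 1 ≤ p) (hn : p < n)
    (t : ℕ → ℝ) (hmono : ∀ i < n + p, t i < t (i + 1))
    (hequi : ∀ i < 2 * p, t (i + 1) - t i = t (i + (n - p) + 1) - t (i + (n - p)))
    (L : ℝ) (x y : ℕ → ℝ)
    (hx : ∀ i < p, x i + L = x (n - p + i))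
    (hy : ∀ i < p, y i = y (n - p + i))
    (X Y : ℝ → ℝ)
    (hX : X = fun s => ∑ i ∈ Finset.range n, bspline t p i s * x i)
    (hY : Y = fun s => ∑ i ∈ Finset.range n, bspline t p i s * y i) :
    X (t p) + L = X (t n) ∧
      ∀ k < p, iteratedDeriv k Y (t p) = iteratedDeriv k Y (t n) := by
  
  -- extended knot vector
  set t' : ℕ → ℝ := fun j => if j ≤ n + p then t j else t (n + p) + ((j - (n + p) : ℕ) : ℝ)
    with ht'def
  have ht'eq : ∀ j, j ≤ n + p → t' j = t j := by
    intro j hj; simp only [ht'def, if_pos hj]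
  have ht' : ∀ j, t' j < t' (j + 1) := by
    intro j
    by_cases h1 : j + 1 ≤ n + p
    · rw [ht'eq j (by omega), ht'eq (j+1) h1]
      exact hmono j (by omega)
    · by_cases h2 : j ≤ n + p
      · have hj : j = n + p := by omega
        rw [ht'eq j h2]
        have e : t' (j+1) = t (n + p) + ((j + 1 - (n + p) : ℕ) : ℝ) := by
          simp only [ht'def, if_neg h1]
        rw [e, hj]
        have e2 : ((n + p + 1 - (n + p) : ℕ) : ℝ) = 1 := by
          norm_num
        rw [e2]
        linarith
      · have e1 : t' j = t (n + p) + ((j - (n + p) : ℕ) : ℝ) := by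
          simp only [ht'def, if_neg h2]
        have e2 : t' (j+1) = t (n + p) + ((j + 1 - (n + p) : ℕ) : ℝ) := by
          simp only [ht'def, if_neg h1]
        rw [e1, e2]
        have e3 : (j - (n + p) : ℕ) + 1 = (j + 1 - (n + p) : ℕ) := by omega
        have hc : ((j - (n + p) : ℕ) : ℝ) + 1 = ((j + 1 - (n + p) : ℕ) : ℝ) := by
          exact_mod_cast congrArg (Nat.cast : ℕ → ℝ) e3
        linarith
  have htop : Tendsto t' atTop atTop := by
    rw [tendsto_atTop_atTop]
    intro b
    obtain ⟨M, hM⟩ := exists_nat_ge (b - t (n + p))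
    refine ⟨n + p + 1 + M, fun j hj => ?_⟩
    have hj' : ¬ j ≤ n + p := by omega
    have e : t' j = t (n + p) + ((j - (n + p) : ℕ) : ℝ) := by
      simp only [ht'def, if_neg hj']
    rw [e]
    have hMj : (M : ℝ) ≤ ((j - (n + p) : ℕ) : ℝ) := by
      exact_mod_cast (by omega : M ≤ j - (n + p))
    linarith
  have hsm' := strictMono_nat_of_lt_succ ht'
  set m := n - p with hmdef
  set T := t m - t 0 with hTdef
  have hshift : ∀ j, j ≤ 2 * p → t (j + m) = t j + T := by
    intro j
    induction j with
    | zero => intro _; rw [Nat.zero_add, hTdef]; ring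
    | succ j ih =>
      intro hj
      have h1 := ih (by omega)
      have h2 := hequi j (by omega)
      have e : j + 1 + m = j + m + 1 := by omega
      rw [e]
      linarith
  have hshift' : ∀ j, j ≤ 2 * p → t' (j + m) = t' j + T := by
    intro j hj
    rw [ht'eq (j + m) (by omega), ht'eq j (by omega)]
    exact hshift j hj
  have hTpn : t' n = t' p + T := by
    have h := hshift' p (by omega)
    rwa [show p + m = n from by omega] at h
  -- rewrite curve sums in terms of t'
  have hbs : ∀ i, i < n → bspline t p i = bspline t' p i := by
    intro i hi
    exact bspline_congr p i (fun j hj hj' => (ht'eq j (by omega)).symm)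
  have hXs : X = fun s => ∑ i ∈ Finset.range n, bspline t' p i s * x i := by
    rw [hX]; funext s
    exact Finset.sum_congr rfl fun i hi => by rw [hbs i (Finset.mem_range.1 hi)]
  have hYs : Y = fun s => ∑ i ∈ Finset.range n, bspline t' p i s * y i := by
    rw [hY]; funext s
    exact Finset.sum_congr rfl fun i hi => by rw [hbs i (Finset.mem_range.1 hi)]
  -- localization of the sums near t' p and t' n
  have hlocal_p : ∀ (z : ℕ → ℝ) (s : ℝ), t' (p-1) < s → s < t' (p+1) →
      ∑ i ∈ Finset.range n, bspline t' p i s * z i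
      = ∑ i ∈ Finset.range p, bspline t' p i s * z i + bspline t' p p s * z p := by
    intro z s hs1 hs2
    rw [← Finset.sum_range_succ]
    refine (Finset.sum_subset ?_ ?_).symm
    · intro i hi
      simp only [Finset.mem_range] at hi ⊢
      omega
    · intro i hi hni
      simp only [Finset.mem_range] at hi hni
      rw [bspline_zero_of_lt ht' p i s
        (lt_of_lt_of_le hs2 (hsm'.monotone (by omega : p + 1 ≤ i))), zero_mul]
  have hlocal_n : ∀ (z : ℕ → ℝ) (u : ℝ), t' (n-1) < u → u < t' (n+1) →
      ∑ i ∈ Finset.range n, bspline t' p i u * z i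
      = ∑ r ∈ Finset.range p, bspline t' p ((n-p-1) + (r+1)) u * z ((n-p-1) + (r+1))
        + bspline t' p (n-p-1) u * z (n-p-1) := by
    intro z u h1 h2
    have hsub : Finset.Ico (n-p-1) n ⊆ Finset.range n := by
      intro i hi
      simp only [Finset.mem_Ico] at hi
      simp only [Finset.mem_range]
      omega
    have hvan : ∀ i ∈ Finset.range n, i ∉ Finset.Ico (n-p-1) n →
        bspline t' p i u * z i = 0 := by
      intro i hi hni
      simp only [Finset.mem_range] at hi
      simp only [Finset.mem_Ico, not_and, not_le] at hni
      have hilt : i < n - p - 1 := by omega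
      rw [bspline_zero_of_ge ht' p i u
        (le_trans (hsm'.monotone (by omega : i + p + 1 ≤ n - 1)) h1.le), zero_mul]
    rw [← Finset.sum_subset hsub hvan, Finset.sum_Ico_eq_sum_range,
      show n - (n-p-1) = p + 1 from by omega, Finset.sum_range_succ']
    simp only [Nat.add_zero]
  -- shifted B-splines
  have hshift_term : ∀ (r : ℕ), r < p → ∀ u : ℝ,
      bspline t' p ((n-p-1) + (r+1)) u = bspline t' p r (u - T) := by
    intro r hr u
    have e : (n-p-1) + (r+1) = r + m := by omega
    rw [e]
    have h := bspline_shift (t := t') T m p r (fun j hj hj' => hshift' j (by omega)) (u - T)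
    rwa [sub_add_cancel] at h
  have hp1 : t' (p-1) < t' p := hsm' (by omega)
  have hp2 : t' p < t' (p+1) := hsm' (by omega)
  have hn1 : t' (n-1) < t' n := hsm' (by omega)
  have hn2 : t' n < t' (n+1) := hsm' (by omega)
  have hBpp : bspline t' p p (t' p) = 0 := bspline_zero_of_le ht' p p hp le_rfl
  have hBlast : ∀ u : ℝ, t' n ≤ u → bspline t' p (n-p-1) u = 0 := by
    intro u hu
    exact bspline_zero_of_ge ht' p (n-p-1) u
      (by rw [show n-p-1+p+1 = n from by omega]; exact hu)
  constructor
  · -- the X part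
    rw [hXs, ← ht'eq p (by omega), ← ht'eq n (by omega)]
    simp only []
    rw [hlocal_p x (t' p) hp1 hp2, hlocal_n x (t' n) hn1 hn2,
      hBpp, zero_mul, add_zero, hBlast (t' n) le_rfl, zero_mul, add_zero]
    have hone : ∑ i ∈ Finset.range p, bspline t' p i (t' p) = 1 := by
      have hpart := bspline_partition ht' p 0 (t' p)
        (by rw [Nat.zero_add]) (by rw [Nat.zero_add]; exact hp2)
      rw [Finset.sum_range_succ] at hpart
      simp only [Nat.zero_add] at hpart
      rwa [hBpp, add_zero] at hpart
    have hRHS : ∀ r ∈ Finset.range p,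
        bspline t' p ((n-p-1) + (r+1)) (t' n) * x ((n-p-1) + (r+1))
        = bspline t' p r (t' p) * (x r + L) := by
      intro r hr
      rw [hshift_term r (Finset.mem_range.1 hr) (t' n),
        show t' n - T = t' p from by rw [hTpn]; ring]
      congr 1
      rw [show (n-p-1) + (r+1) = m + r from by omega]
      exact (hx r (Finset.mem_range.1 hr)).symm
    rw [Finset.sum_congr rfl hRHS]
    have hsplit : ∑ r ∈ Finset.range p, bspline t' p r (t' p) * (x r + L)
        = ∑ r ∈ Finset.range p, bspline t' p r (t' p) * x r
          + (∑ r ∈ Finset.range p, bspline t' p r (t' p)) * L := by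
      rw [Finset.sum_mul, ← Finset.sum_add_distrib]
      exact Finset.sum_congr rfl fun r _ => by ring
    rw [hsplit, hone, one_mul]
  · -- the Y part
    intro k hk
    set g : ℝ → ℝ := fun s => ∑ i ∈ Finset.range p, bspline t' p i s * y i with hgdef
    have hcd : ∀ i, ContDiff ℝ (k : ℕ) (bspline t' p i) := by
      intro i
      have h := bspline_contDiff ht' htop (p-1) i
      rw [show p - 1 + 1 = p from by omega] at h
      exact h.of_le (by exact_mod_cast (by omega : k ≤ p - 1))
    have hgcd : ContDiff ℝ (k : ℕ) g := by
      rw [hgdef]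
      apply ContDiff.sum
      intro i _
      exact (hcd i).mul contDiff_const
    have hYp : iteratedDeriv k Y (t' p) = iteratedDeriv k g (t' p) := by
      have hev : Y =ᶠ[𝓝 (t' p)] fun s => g s + bspline t' p p s * y p := by
        filter_upwards [Ioo_mem_nhds hp1 hp2] with s hs
        rw [hYs]
        exact hlocal_p y s hs.1 hs.2
      rw [hev.iteratedDeriv_eq k,
        iteratedDeriv_add' hgcd ((hcd p).mul contDiff_const) _,
        iteratedDeriv_zero_on_Iic (a := t' p)
          (fun s hs => by rw [bspline_zero_of_le ht' p p hp hs, zero_mul])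
          k ((hcd p).mul contDiff_const) (t' p) le_rfl,
        add_zero]
    have hYn : iteratedDeriv k Y (t' n) = iteratedDeriv k g (t' p) := by
      have hev : Y =ᶠ[𝓝 (t' n)] fun u => g (u + (-T)) + bspline t' p (n-p-1) u * y (n-p-1) := by
        filter_upwards [Ioo_mem_nhds hn1 hn2] with u hu
        rw [hYs]
        have h := hlocal_n y u hu.1 hu.2
        simp only [] at h ⊢
        rw [h]
        congr 1
        · rw [hgdef]
          refine Finset.sum_congr rfl fun r hr => ?_
          rw [hshift_term r (Finset.mem_range.1 hr) u, show u - T = u + (-T) from by ring]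
          congr 1
          rw [show (n-p-1) + (r+1) = m + r from by omega]
          exact (hy r (Finset.mem_range.1 hr)).symm
      rw [hev.iteratedDeriv_eq k,
        iteratedDeriv_add'
          (show ContDiff ℝ (k : ℕ) (fun u : ℝ => g (u + (-T))) from
            hgcd.comp (contDiff_id.add contDiff_const))
          ((hcd (n-p-1)).mul contDiff_const) _,
        iteratedDeriv_zero_on_Ici (a := t' n)
          (fun s hs => by rw [hBlast s hs, zero_mul])
          k ((hcd (n-p-1)).mul contDiff_const) (t' n) le_rfl,
        add_zero, iteratedDeriv_comp_add_const k g (-T)]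
      show iteratedDeriv k g (t' n + -T) = iteratedDeriv k g (t' p)
      congr 1
      rw [hTpn]; ring
    rw [← ht'eq p (by omega), ← ht'eq n (by omega), hYp, hYn]
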